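/- For jointly distributed random variables (X,Y) and any measurable critic function f, the InfoNCE bound holds: given N i.i.d. pairs (X_i, Y_i), the mutual information satisfies I(X;Y) ≥ log N − L, where L = −E[log( e^{f(X_1,Y_1)} / Σ_{k=1}^N e^{f(X_1,Y_k)} )]. -/

import Mathlib

open Real Finset

lemma sum_pi_mul {ι γ : Type*} [Fintype ι] [DecidableEq ι] [Fintype γ]
    (i0 : ι) (w : ι → γ → ℝ) (H : γ → ℝ) :
    ∑ y : ι → γ, (∏ k, w k (y k)) * H (y i0)
      = (∑ c, w i0 c * H c) * ∏ k ∈ Finset.univ.erase i0, (∑ c, w k c) := by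
  classical
  have h1 : ∀ y : ι → γ, (∏ k, w k (y k)) * H (y i0)
      = ∏ k, (if k = i0 then w k (y k) * H (y k) else w k (y k)) := by
    intro y
    rw [← Finset.mul_prod_erase Finset.univ
        (fun k => if k = i0 then w k (y k) * H (y k) else w k (y k)) (mem_univ i0),
      ← Finset.mul_prod_erase Finset.univ (fun k => w k (y k)) (mem_univ i0),
      if_pos rfl,
      Finset.prod_congr rfl (fun k hk => if_neg (Finset.ne_of_mem_erase hk))]
    ring
  simp only [h1]
  rw [← Fintype.piFinset_univ, ← Finset.prod_univ_sum (fun _ : ι => (Finset.univ : Finset γ))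
      (fun k c => if k = i0 then w k c * H c else w k c)]
  rw [← Finset.mul_prod_erase Finset.univ
      (fun k => ∑ c, if k = i0 then w k c * H c else w k c) (mem_univ i0)]
  simp only [if_pos rfl]
  congr 1
  exact Finset.prod_congr rfl fun k hk => by
    simp [if_neg (Finset.ne_of_mem_erase hk)]

set_option maxHeartbeats 1000000 in
/-- InfoNCE bound (discrete setting): for a joint distribution `p` on `α × β` with
marginals `pX`, `pY`, any critic `f`, and `N` i.i.d. samples, the mutual information
`I(X;Y)` is at least `log N - L` where `L` is the InfoNCE loss. -/
theorem infoNCE_mutual_information_bound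
    {α β : Type*} [Fintype α] [Fintype β]
    (N : ℕ) (hN : 0 < N)
    (p : α × β → ℝ) (hp : ∀ x, 0 < p x) (hsum : ∑ x, p x = 1)
    (f : α → β → ℝ)
    (pX : α → ℝ) (hpX : ∀ a, pX a = ∑ b, p (a, b))
    (pY : β → ℝ) (hpY : ∀ b, pY b = ∑ a, p (a, b))
    (I : ℝ)
    (hI : I = ∑ a, ∑ b, p (a, b) * Real.log (p (a, b) / (pX a * pY b)))
    (L : ℝ)
    (hL : L = -∑ s : Fin N → α × β,
        (∏ k, p (s k)) *
          Real.log (Real.exp (f (s ⟨0, hN⟩).1 (s ⟨0, hN⟩).2) /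
            ∑ k, Real.exp (f (s ⟨0, hN⟩).1 (s k).2))) :
    I ≥ Real.log N - L := by
  classical
  set i0 : Fin N := ⟨0, hN⟩ with hi0
  -- nonemptiness
  have hne : Nonempty (α × β) := by
    by_contra h
    rw [not_nonempty_iff] at h
    rw [Finset.univ_eq_empty, Finset.sum_empty] at hsum
    exact absurd hsum (by norm_num)
  have hneA : Nonempty α := ⟨hne.some.1⟩
  have hneB : Nonempty β := ⟨hne.some.2⟩
  have hpX0 : ∀ a, 0 < pX a := fun a => by
    rw [hpX]; exact Finset.sum_pos (fun b _ => hp _) Finset.univ_nonempty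
  have hpY0 : ∀ b, 0 < pY b := fun b => by
    rw [hpY]; exact Finset.sum_pos (fun a _ => hp _) Finset.univ_nonempty
  have hsY : ∑ b, pY b = 1 := by
    simp only [hpY]
    rw [← hsum, Fintype.sum_prod_type]
    exact Finset.sum_comm
  have hsX : ∑ a, pX a = 1 := by
    simp only [hpX]
    rw [← hsum, Fintype.sum_prod_type]
  have hN' : (N : ℝ) ≠ 0 := Nat.cast_ne_zero.mpr hN.ne'
  -- main objects
  set W : α → (Fin N → β) → ℝ :=
    fun x y => ∏ k, (if k = i0 then p (x, y k) else pY (y k)) with hW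
  set Q : α → (Fin N → β) → ℝ := fun x y => pX x * ∏ k, pY (y k) with hQ
  set S : α → (Fin N → β) → ℝ := fun x y => ∑ k, Real.exp (f x (y k)) with hS
  have hW0 : ∀ x y, 0 < W x y := by
    intro x y
    simp only [hW]
    refine Finset.prod_pos fun k _ => ?_
    by_cases hk : k = i0
    · rw [if_pos hk]; exact hp _
    · rw [if_neg hk]; exact hpY0 _
  have hQ0 : ∀ x y, 0 < Q x y :=
    fun x y => mul_pos (hpX0 x) (Finset.prod_pos fun k _ => hpY0 _)
  have hS0 : ∀ x y, 0 < S x y :=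
    fun x y => Finset.sum_pos (fun k _ => Real.exp_pos _) ⟨i0, mem_univ _⟩
  have hWsplit : ∀ x y, W x y = p (x, y i0) * ∏ k ∈ Finset.univ.erase i0, pY (y k) := by
    intro x y
    simp only [hW]
    rw [← Finset.mul_prod_erase Finset.univ
        (fun k => if k = i0 then p (x, y k) else pY (y k)) (mem_univ i0), if_pos rfl]
    congr 1
    exact Finset.prod_congr rfl fun k hk => if_neg (Finset.ne_of_mem_erase hk)
  have herase : ∀ x : α, ∏ k ∈ Finset.univ.erase i0,
      (∑ c, (if k = i0 then p (x, c) else pY c)) = 1 := by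
    intro x
    rw [Finset.prod_congr rfl (fun k hk => ?_), Finset.prod_const_one]
    rw [Finset.sum_congr rfl (fun c _ => if_neg (Finset.ne_of_mem_erase hk)), hsY]
  -- marginalization of the i.i.d. sample sum
  have key : ∀ G : α → (Fin N → β) → ℝ,
      ∑ s : Fin N → α × β, (∏ k, p (s k)) * G (s i0).1 (fun k => (s k).2)
        = ∑ x, ∑ y, W x y * G x y := by
    intro G
    have e1 : ∑ s : Fin N → α × β, (∏ k, p (s k)) * G (s i0).1 (fun k => (s k).2)
        = ∑ uv : (Fin N → α) × (Fin N → β),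
            (∏ k, p (uv.1 k, uv.2 k)) * G (uv.1 i0) uv.2 := by
      apply Fintype.sum_equiv (Equiv.arrowProdEquivProdArrow (Fin N) (fun _ => α) (fun _ => β))
      intro s
      rfl
    rw [e1, Fintype.sum_prod_type, Finset.sum_comm]
    have e2 : ∀ v : Fin N → β, ∑ u : Fin N → α, (∏ k, p (u k, v k)) * G (u i0) v
        = (∑ a, p (a, v i0) * G a v) * ∏ k ∈ Finset.univ.erase i0, pY (v k) := by
      intro v
      rw [sum_pi_mul i0 (fun k a => p (a, v k)) (fun a => G a v)]
      congr 1
      exact Finset.prod_congr rfl fun k _ => (hpY (v k)).symm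
    simp only [e2, Finset.sum_mul]
    rw [Finset.sum_comm]
    refine Finset.sum_congr rfl fun x _ => Finset.sum_congr rfl fun y _ => ?_
    rw [hWsplit x y]
    ring
  -- total mass of W
  have hWsum1 : ∀ x, ∑ y : Fin N → β, W x y = pX x := by
    intro x
    have h := sum_pi_mul (γ := β) i0
      (fun k c => if k = i0 then p (x, c) else pY c) (fun _ => (1 : ℝ))
    simp only [mul_one] at h
    simp only [hW]
    rw [h, herase x, mul_one, hpX]
    simp
  have hWsum : ∑ x, ∑ y : Fin N → β, W x y = 1 := by
    rw [Finset.sum_congr rfl fun x _ => hWsum1 x, hsX]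
  -- I as a sum over the extended space
  have hI2 : ∑ x, ∑ y : Fin N → β,
      W x y * Real.log (p (x, y i0) / (pX x * pY (y i0))) = I := by
    rw [hI]
    refine Finset.sum_congr rfl fun x _ => ?_
    have h := sum_pi_mul (γ := β) i0
      (fun k c => if k = i0 then p (x, c) else pY c)
      (fun b => Real.log (p (x, b) / (pX x * pY b)))
    simp only [hW]
    rw [h, herase x, mul_one]
    simp
  -- ratio identity
  have hratio : ∀ x y, W x y / Q x y = p (x, y i0) / (pX x * pY (y i0)) := by
    intro x y
    rw [hWsplit x y]
    simp only [hQ]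
    rw [← Finset.mul_prod_erase Finset.univ (fun k => pY (y k)) (mem_univ i0)]
    have hR : 0 < ∏ k ∈ Finset.univ.erase i0, pY (y k) :=
      Finset.prod_pos fun k _ => hpY0 _
    rw [div_eq_div_iff (mul_pos (hpX0 x) (mul_pos (hpY0 (y i0)) hR)).ne'
      (mul_pos (hpX0 x) (hpY0 (y i0))).ne']
    ring
  -- the exchangeability computation
  have hQ1 : ∀ x, ∑ y : Fin N → β,
      (∏ k, pY (y k)) * (Real.exp (f x (y i0)) / S x y) = 1 / N := by
    intro x
    have hsym : ∀ j : Fin N,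
        ∑ y : Fin N → β, (∏ k, pY (y k)) * (Real.exp (f x (y j)) / S x y)
          = ∑ y : Fin N → β, (∏ k, pY (y k)) * (Real.exp (f x (y i0)) / S x y) := by
      intro j
      rw [← Equiv.sum_comp (Equiv.arrowCongr (Equiv.swap i0 j) (Equiv.refl β))
          (fun y => (∏ k, pY (y k)) * (Real.exp (f x (y j)) / S x y))]
      refine Finset.sum_congr rfl fun y _ => ?_
      have hEy : (Equiv.arrowCongr (Equiv.swap i0 j) (Equiv.refl β)) y
          = fun k => y (Equiv.swap i0 j k) := by
        funext k
        simp [Equiv.arrowCongr, Equiv.symm_swap]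
      simp only [hEy]
      have h1 : (∏ k, pY (y (Equiv.swap i0 j k))) = ∏ k, pY (y k) :=
        Equiv.prod_comp (Equiv.swap i0 j) (fun k => pY (y k))
      have h2 : S x (fun k => y (Equiv.swap i0 j k)) = S x y := by
        rw [hS]
        exact Equiv.sum_comp (Equiv.swap i0 j) (fun k => Real.exp (f x (y k)))
      rw [h1, h2, Equiv.swap_apply_right]
    have htot : ∑ j : Fin N, ∑ y : Fin N → β,
        (∏ k, pY (y k)) * (Real.exp (f x (y j)) / S x y) = 1 := by
      rw [Finset.sum_comm]
      have hinner : ∀ y : Fin N → β, ∑ j : Fin N,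
          (∏ k, pY (y k)) * (Real.exp (f x (y j)) / S x y) = ∏ k, pY (y k) := by
        intro y
        rw [← Finset.mul_sum, ← Finset.sum_div]
        rw [show (∑ j : Fin N, Real.exp (f x (y j))) = S x y from rfl]
        rw [div_self (hS0 x y).ne', mul_one]
      rw [Finset.sum_congr rfl fun y _ => hinner y]
      rw [← Fintype.piFinset_univ,
        ← Finset.prod_univ_sum (fun _ : Fin N => (Finset.univ : Finset β))
          (fun _ c => pY c)]
      simp [hsY]
    rw [Finset.sum_congr rfl (fun j _ => hsym j), Finset.sum_const,
      Finset.card_univ, Fintype.card_fin, nsmul_eq_mul] at htot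
    field_simp at htot ⊢
    linarith
  -- total mass of Q against the exponential ratio
  have hQsum : ∑ x, ∑ y : Fin N → β,
      Q x y * ((N : ℝ) * Real.exp (f x (y i0)) / S x y) = 1 := by
    have h1 : ∀ x, ∑ y : Fin N → β,
        Q x y * ((N : ℝ) * Real.exp (f x (y i0)) / S x y) = pX x := by
      intro x
      have e1 : ∀ y : Fin N → β, Q x y * ((N : ℝ) * Real.exp (f x (y i0)) / S x y)
          = (pX x * (N : ℝ)) * ((∏ k, pY (y k)) * (Real.exp (f x (y i0)) / S x y)) := by
        intro y
        simp only [hQ]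
        ring
      rw [Finset.sum_congr rfl fun y _ => e1 y, ← Finset.mul_sum, hQ1 x]
      field_simp
    rw [Finset.sum_congr rfl fun x _ => h1 x, hsX]
  -- Gibbs' inequality (termwise via log t ≤ t - 1)
  have gibbs : ∑ x, ∑ y : Fin N → β,
      W x y * Real.log ((N : ℝ) * Real.exp (f x (y i0)) / S x y)
        ≤ ∑ x, ∑ y : Fin N → β, W x y * Real.log (W x y / Q x y) := by
    have key2 : ∀ x y, W x y * Real.log ((N : ℝ) * Real.exp (f x (y i0)) / S x y)
        ≤ W x y * Real.log (W x y / Q x y)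
          + (Q x y * ((N : ℝ) * Real.exp (f x (y i0)) / S x y) - W x y) := by
      intro x y
      have hA : 0 < (N : ℝ) * Real.exp (f x (y i0)) / S x y :=
        div_pos (mul_pos (by positivity) (Real.exp_pos _)) (hS0 x y)
      have hB : 0 < Q x y * ((N : ℝ) * Real.exp (f x (y i0)) / S x y) / W x y :=
        div_pos (mul_pos (hQ0 x y) hA) (hW0 x y)
      have hlog := Real.log_le_sub_one_of_pos hB
      have hsplit : Real.log ((N : ℝ) * Real.exp (f x (y i0)) / S x y)
          = Real.log (W x y / Q x y)
            + Real.log (Q x y * ((N : ℝ) * Real.exp (f x (y i0)) / S x y) / W x y) := by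
        rw [Real.log_div (hW0 x y).ne' (hQ0 x y).ne',
          Real.log_div (mul_pos (hQ0 x y) hA).ne' (hW0 x y).ne',
          Real.log_mul (hQ0 x y).ne' hA.ne']
        ring
      rw [hsplit, mul_add]
      have h3 : W x y * Real.log (Q x y * ((N : ℝ) * Real.exp (f x (y i0)) / S x y) / W x y)
          ≤ Q x y * ((N : ℝ) * Real.exp (f x (y i0)) / S x y) - W x y := by
        have h4 := mul_le_mul_of_nonneg_left hlog (hW0 x y).le
        calc W x y * Real.log (Q x y * ((N : ℝ) * Real.exp (f x (y i0)) / S x y) / W x y)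
            ≤ W x y * (Q x y * ((N : ℝ) * Real.exp (f x (y i0)) / S x y) / W x y - 1) := h4
          _ = Q x y * ((N : ℝ) * Real.exp (f x (y i0)) / S x y) - W x y := by
              rw [mul_sub, mul_one, mul_comm, div_mul_cancel₀ _ (hW0 x y).ne']
      linarith
    calc ∑ x, ∑ y : Fin N → β,
        W x y * Real.log ((N : ℝ) * Real.exp (f x (y i0)) / S x y)
        ≤ ∑ x, ∑ y : Fin N → β, (W x y * Real.log (W x y / Q x y)
            + (Q x y * ((N : ℝ) * Real.exp (f x (y i0)) / S x y) - W x y)) := by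
          exact Finset.sum_le_sum fun x _ => Finset.sum_le_sum fun y _ => key2 x y
      _ = ∑ x, ∑ y : Fin N → β, W x y * Real.log (W x y / Q x y)
            + ((∑ x, ∑ y : Fin N → β, Q x y * ((N : ℝ) * Real.exp (f x (y i0)) / S x y))
              - ∑ x, ∑ y : Fin N → β, W x y) := by
          rw [Finset.sum_congr rfl fun x _ => Finset.sum_add_distrib,
            Finset.sum_add_distrib]
          congr 1
          rw [Finset.sum_congr rfl fun x _ => Finset.sum_sub_distrib _ _,
            Finset.sum_sub_distrib]
      _ = ∑ x, ∑ y : Fin N → β, W x y * Real.log (W x y / Q x y) := by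
          rw [hQsum, hWsum]; ring
  -- express log N - L
  have hLrw : Real.log N - L = ∑ x, ∑ y : Fin N → β,
      W x y * Real.log ((N : ℝ) * Real.exp (f x (y i0)) / S x y) := by
    have hkeyL : -L = ∑ x, ∑ y : Fin N → β,
        W x y * Real.log (Real.exp (f x (y i0)) / S x y) := by
      rw [hL, neg_neg]
      exact key (fun x y => Real.log (Real.exp (f x (y i0)) / S x y))
    have e3 : ∀ x (y : Fin N → β),
        W x y * Real.log ((N : ℝ) * Real.exp (f x (y i0)) / S x y)
          = W x y * Real.log N + W x y * Real.log (Real.exp (f x (y i0)) / S x y) := by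
      intro x y
      rw [mul_div_assoc, Real.log_mul hN' (div_pos (Real.exp_pos _) (hS0 x y)).ne']
      ring
    rw [Finset.sum_congr rfl fun x _ => Finset.sum_congr rfl fun y _ => e3 x y]
    rw [Finset.sum_congr rfl fun x _ => Finset.sum_add_distrib, Finset.sum_add_distrib]
    simp only [← Finset.sum_mul]
    rw [hWsum, one_mul, ← hkeyL]
    ring
  -- conclusion
  rw [ge_iff_le, hLrw, ← hI2]
  refine le_trans gibbs (le_of_eq ?_)
  exact Finset.sum_congr rfl fun x _ => Finset.sum_congr rfl fun y _ => by rw [hratio]
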